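/- arXiv:1907.06549 — 3 statements merged into one kernel-verified Lean document; each statement's English description precedes it below -/
import Mathlib

section
/- The cyclic group C₅ generated by a 5-cycle acting on 5 points is not a relation group: there is no hypergraph H on a 5-element set with Aut(H) = C₅. -/
open Pointwise

lemma neg_smul_eq_rot : ∀ s : Finset (Fin 5), ∃ k : Fin 5,
    (Equiv.neg (Fin 5)) • s = (finRotate 5) ^ (k : ℕ) • s := by decide

/-- the cyclic group `C₅` generated by a 5-cycle on 5 points is not a
relation group: no hypergraph `H` on a 5-element set has `Aut(H) = C₅`. -/
theorem stmt4 :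
    ¬ ∃ H : Set (Finset (Fin 5)),
        {g : Equiv.Perm (Fin 5) | ∀ x ∈ H, g • x ∈ H}
          = (Subgroup.zpowers (finRotate 5) : Set (Equiv.Perm (Fin 5))) := by
  rintro ⟨H, hH⟩
  have hr : (finRotate 5) ∈ {g : Equiv.Perm (Fin 5) | ∀ x ∈ H, g • x ∈ H} := by
    rw [hH]; exact Subgroup.mem_zpowers _
  have hpow : ∀ (k : ℕ), ∀ x ∈ H, (finRotate 5) ^ k • x ∈ H := by
    intro k
    induction k with
    | zero => intro x hx; simpa using hx
    | succ n ih =>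
      intro x hx
      rw [pow_succ, mul_smul]
      exact ih _ (hr x hx)
  have hτ : (Equiv.neg (Fin 5)) ∈ {g : Equiv.Perm (Fin 5) | ∀ x ∈ H, g • x ∈ H} := by
    intro x hx
    obtain ⟨k, hk⟩ := neg_smul_eq_rot x
    rw [hk]
    exact hpow k x hx
  rw [hH] at hτ
  obtain ⟨k, hk⟩ := hτ
  have hk' : (finRotate 5) ^ k = Equiv.neg (Fin 5) := hk
  have hneg2 : (Equiv.neg (Fin 5)) * (Equiv.neg (Fin 5)) = 1 := by decide
  have h2k : (finRotate 5) ^ (k + k) = 1 := by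
    rw [zpow_add, hk', hneg2]
  have hord : orderOf (finRotate 5) = 5 := by
    have h5 : Fact (Nat.Prime 5) := ⟨by norm_num⟩
    exact orderOf_eq_prime (by decide) (by decide)
  have hdvd : (5 : ℤ) ∣ k + k := by
    have := orderOf_dvd_iff_zpow_eq_one.mpr h2k
    rwa [hord] at this
  have hdk : (5 : ℤ) ∣ k := by omega
  obtain ⟨m, rfl⟩ := hdk
  have h5one : (finRotate 5) ^ (5 : ℤ) = 1 := by
    rw [show (5:ℤ) = ((5:ℕ):ℤ) by norm_num, zpow_natCast]
    decide
  rw [zpow_mul, h5one, one_zpow] at hk'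
  exact absurd hk' (by decide)
end

section
/- If G ≤ Sym(Ω) is a relation group defined by a relation R (i.e., G = Aut(R)) and y is a regular set for G with |y| ∉ ar(R), then for every subgroup K ≤ G, the group Aut(R ∪ y^K) equals K; i.e., every subgroup of G is a relation group. -/
open Pointwise

/-- Siemons–Volta Lemma 3.1(i): if `G = Aut(R)`, `y` is a regular set
for `G` with `|y| ∉ ar(R)`, then for every subgroup `K ≤ G` we have
`Aut(R ∪ y^K) = K`; i.e. every subgroup of `G` is a relation group. -/
theorem stmt16 {Ω : Type*} [Fintype Ω] [DecidableEq Ω]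
    (G : Subgroup (Equiv.Perm Ω)) (R : Set (Finset Ω))
    (hG : (G : Set (Equiv.Perm Ω)) = {g : Equiv.Perm Ω | ∀ x ∈ R, g • x ∈ R})
    (y : Finset Ω)
    (hreg : ∀ g ∈ G, g • y = y → g = 1)
    (har : ∀ x ∈ R, x.card ≠ y.card) :
    ∀ K : Subgroup (Equiv.Perm Ω), K ≤ G →
      {g : Equiv.Perm Ω |
          ∀ x ∈ R ∪ {z : Finset Ω | ∃ k ∈ K, k • y = z},
            g • x ∈ R ∪ {z : Finset Ω | ∃ k ∈ K, k • y = z}}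
        = (K : Set (Equiv.Perm Ω)) := by
  intro K hKG
  ext g
  simp only [Set.mem_setOf_eq, Set.mem_union, SetLike.mem_coe]
  constructor
  · intro hg
    -- g preserves R
    have hgR : ∀ x ∈ R, g • x ∈ R := by
      intro x hx
      rcases hg x (Or.inl hx) with h | ⟨k, hk, hky⟩
      · exact h
      · exfalso
        apply har x hx
        have : (g • x).card = x.card := Finset.card_smul_finset g x
        have : y.card = x.card := by
          rw [← this, ← hky, Finset.card_smul_finset]
        omega
    have hgG : g ∈ G := by
      have := hG ▸ (SetLike.mem_coe (p := G) (x := g))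
      rw [← SetLike.mem_coe, hG]; exact hgR
    -- g • y ∈ y^K
    have hy : g • y ∈ R ∪ {z : Finset Ω | ∃ k ∈ K, k • y = z} :=
      hg y (Or.inr ⟨1, K.one_mem, one_smul _ _⟩)
    rcases hy with h | ⟨k, hk, hky⟩
    · exfalso
      apply har _ h
      exact Finset.card_smul_finset g y
    · -- k⁻¹ * g fixes y
      have hmem : k⁻¹ * g ∈ G := mul_mem (inv_mem (hKG hk)) hgG
      have hfix : (k⁻¹ * g) • y = y := by
        rw [mul_smul, ← hky, inv_smul_smul]
      have := hreg _ hmem hfix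
      have hg_eq : g = k := by
        have : k * (k⁻¹ * g) = k * 1 := by rw [this]
        simpa [← mul_assoc] using this
      rw [hg_eq]; exact hk
  · intro hgK x hx
    have hgG : g ∈ G := hKG hgK
    have hgR : ∀ x ∈ R, g • x ∈ R := by
      rw [← SetLike.mem_coe, hG] at hgG; exact hgG
    rcases hx with h | ⟨k, hk, hky⟩
    · exact Or.inl (hgR x h)
    · refine Or.inr ⟨g * k, mul_mem hgK hk, ?_⟩
      rw [mul_smul, hky]
end

section
/- Let G ≤ Sym(Ω) with a regular set y, and suppose G is not set-transitive and is maximal in Sym(Ω) with respect to not being set-transitive. Then every subgroup of G is a relation group (the automorphism group of some hypergraph on Ω). -/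
open Pointwise

private lemma perm_smul_compl {Ω : Type*} [Fintype Ω] [DecidableEq Ω]
    (g : Equiv.Perm Ω) (s : Finset Ω) : g • sᶜ = (g • s)ᶜ := by
  ext a
  rw [← Finset.inv_smul_mem_iff, Finset.mem_compl, Finset.mem_compl,
    ← Finset.inv_smul_mem_iff]

private lemma core {Ω : Type*} [Fintype Ω] [DecidableEq Ω]
    (G K : Subgroup (Equiv.Perm Ω)) (hKG : K ≤ G)
    (hmax : ∀ G' : Subgroup (Equiv.Perm Ω), G < G' →
      ∀ x z : Finset Ω, x.card = z.card → ∃ g ∈ G', g • x = z)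
    (x z u : Finset Ω) (hxz : x.card = z.card) (hz : ∀ g ∈ G, g • x ≠ z)
    (hu : ∀ g ∈ G, g • u = u → g = 1) (hcu : u.card ≠ x.card) :
    ∃ H : Set (Finset Ω),
      (K : Set (Equiv.Perm Ω)) = {g : Equiv.Perm Ω | ∀ x ∈ H, g • x ∈ H} := by
  classical
  set O : Finset (Finset Ω) :=
    (Finset.univ.filter (· ∈ G)).image (fun a => a • x) with hO
  have hmemO : ∀ s, s ∈ O ↔ ∃ a ∈ G, a • x = s := by
    intro s; simp [hO]
  have hxO : x ∈ O := (hmemO x).2 ⟨1, G.one_mem, one_smul _ _⟩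
  have hcardO : ∀ s ∈ O, s.card = x.card := by
    intro s hs
    obtain ⟨a, _, rfl⟩ := (hmemO s).1 hs
    exact Finset.card_smul_finset a x
  have hGO : ∀ g ∈ G, g • O = O := by
    intro g hg
    apply Finset.eq_of_subset_of_card_le
    · intro t ht
      obtain ⟨s, hs, rfl⟩ := Finset.mem_smul_finset.1 ht
      obtain ⟨a, ha, rfl⟩ := (hmemO s).1 hs
      exact (hmemO _).2 ⟨g * a, G.mul_mem hg ha, mul_smul g a x⟩
    · rw [Finset.card_smul_finset]
  have hzO : z ∉ O := by
    intro hzo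
    obtain ⟨a, ha, haz⟩ := (hmemO z).1 hzo
    exact hz a ha haz
  have hstab : ∀ w : Equiv.Perm Ω, w • O = O → w ∈ G := by
    intro w hw
    by_contra hwG
    have hlt : G < G ⊔ Subgroup.zpowers w := by
      refine lt_of_le_of_ne le_sup_left fun h => hwG ?_
      rw [h]; exact Subgroup.mem_sup_right (Subgroup.mem_zpowers w)
    obtain ⟨g, hg, hgxz⟩ := hmax _ hlt x z hxz
    have hgO : g • O = O := by
      have hle : G ⊔ Subgroup.zpowers w ≤ MulAction.stabilizer (Equiv.Perm Ω) O := by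
        refine sup_le (fun a ha => hGO a ha) ?_
        rw [Subgroup.zpowers_le]; exact hw
      exact hle hg
    have hmem : g • x ∈ O := hgO ▸ Finset.smul_mem_smul_finset hxO
    rw [hgxz] at hmem
    exact hzO hmem
  refine ⟨{s | (∃ k ∈ K, k • u = s) ∨ s ∈ O}, ?_⟩
  ext g
  simp only [SetLike.mem_coe, Set.mem_setOf_eq]
  constructor
  · intro hgK s hs
    rcases hs with ⟨k, hk, rfl⟩ | hs
    · exact Or.inl ⟨g * k, K.mul_mem hgK hk, mul_smul g k u⟩
    · refine Or.inr ?_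
      have h1 := hGO g (hKG hgK)
      exact h1 ▸ Finset.smul_mem_smul_finset hs
  · intro hg
    have hgO : ∀ s ∈ O, g • s ∈ O := by
      intro s hs
      rcases hg s (Or.inr hs) with ⟨k, hk, hks⟩ | h
      · exfalso
        have h1 : (g • s).card = x.card := by
          rw [Finset.card_smul_finset]; exact hcardO s hs
        have h2 : (g • s).card = u.card := by
          rw [← hks, Finset.card_smul_finset]
        exact hcu (h2.symm.trans h1)
      · exact h
    have hgG : g ∈ G := by
      apply hstab
      apply Finset.eq_of_subset_of_card_le
      · intro t ht
        obtain ⟨s, hs, rfl⟩ := Finset.mem_smul_finset.1 ht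
        exact hgO s hs
      · rw [Finset.card_smul_finset]
    rcases hg u (Or.inl ⟨1, K.one_mem, one_smul _ _⟩) with ⟨k, hk, hku⟩ | h
    · have h0 : (k⁻¹ * g) • u = u := by
        rw [mul_smul, ← hku, inv_smul_smul]
      have h1 : k⁻¹ * g = 1 :=
        hu _ (G.mul_mem (G.inv_mem (hKG hk)) hgG) h0
      rw [inv_mul_eq_one] at h1
      exact h1 ▸ hk
    · exfalso
      have h1 := hcardO _ h
      rw [Finset.card_smul_finset] at h1
      exact hcu h1

/-- Siemons–Volta Lemma 3.1(ii): if `G` has a regular set, is not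
set-transitive, and is maximal in `Sym(Ω)` with that property, then every subgroup of
`G` is a relation group. -/
theorem stmt17 {Ω : Type*} [Fintype Ω] [DecidableEq Ω]
    (G : Subgroup (Equiv.Perm Ω)) (y : Finset Ω)
    (hreg : ∀ g ∈ G, g • y = y → g = 1)
    (hnst : ¬ ∀ x z : Finset Ω, x.card = z.card → ∃ g ∈ G, g • x = z)
    (hmax : ∀ G' : Subgroup (Equiv.Perm Ω), G < G' →
      ∀ x z : Finset Ω, x.card = z.card → ∃ g ∈ G', g • x = z) :
    ∀ K : Subgroup (Equiv.Perm Ω), K ≤ G →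
      ∃ H : Set (Finset Ω),
        (K : Set (Equiv.Perm Ω)) = {g : Equiv.Perm Ω | ∀ x ∈ H, g • x ∈ H} := by
  classical
  intro K hKG
  push_neg at hnst
  obtain ⟨x, z, hxz, hz⟩ := hnst
  by_cases hcase : ∃ x' z' : Finset Ω,
      x'.card = z'.card ∧ x'.card ≠ y.card ∧ ∀ g ∈ G, g • x' ≠ z'
  · obtain ⟨x', z', h1, h2, h3⟩ := hcase
    exact core G K hKG hmax x' z' y h1 h3 hreg (fun h => h2 h.symm)
  · push_neg at hcase
    -- hcase : ∀ x' z', x'.card = z'.card → x'.card ≠ y.card → ∃ g ∈ G, g • x' = z'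
    have hm : x.card = y.card := by
      by_contra hne
      obtain ⟨g, hg, hgx⟩ := hcase x z hxz hne
      exact hz g hg hgx
    have hm1 : y.card ≠ 0 := by
      intro h0
      have hx0 : x = ∅ := Finset.card_eq_zero.1 (by rw [hm, h0])
      have hz0 : z = ∅ := Finset.card_eq_zero.1 (by rw [← hxz, hm, h0])
      exact hz 1 G.one_mem (by rw [hx0, hz0, one_smul])
    have hmn : y.card ≤ Fintype.card Ω := y.card_le_univ
    have h2m : Fintype.card Ω = 2 * y.card := by
      by_contra hne
      have hsub : xᶜ.card ≠ y.card := by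
        rw [Finset.card_compl, hm]; omega
      obtain ⟨g, hg, hgx⟩ := hcase xᶜ zᶜ
        (by rw [Finset.card_compl, Finset.card_compl, hxz]) hsub
      apply hz g hg
      have hc := perm_smul_compl g x
      rw [hgx] at hc
      exact compl_injective hc.symm
    obtain ⟨u₀, -, hu₀card⟩ := Finset.exists_subset_card_eq
      (s := (Finset.univ : Finset Ω)) (n := y.card - 1)
      (by rw [Finset.card_univ]; omega)
    have hreg' : ∀ g ∈ G, g • u₀ = u₀ → g = 1 := by
      intro g₀ hg₀G hg₀fix
      by_contra hg₀ne
      set GF : Finset (Equiv.Perm Ω) := Finset.univ.filter (· ∈ G) with hGF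
      have hmemGF : ∀ a : Equiv.Perm Ω, a ∈ GF ↔ a ∈ G := by
        intro a; simp [hGF]
      -- L1 : GF.card + 1 ≤ choose n m
      set A : Finset (Finset Ω) := GF.image (fun a => a • y) with hA
      have hAcard : A.card = GF.card := by
        apply Finset.card_image_of_injOn
        intro a ha b hb hab
        simp only at hab
        have h0 : (b⁻¹ * a) • y = y := by rw [mul_smul, hab, inv_smul_smul]
        have h1 := hreg _ (G.mul_mem (G.inv_mem ((hmemGF b).1 hb))
          ((hmemGF a).1 ha)) h0
        rw [inv_mul_eq_one] at h1
        exact h1.symm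
      obtain ⟨w, hwcard, hwA⟩ : ∃ w : Finset Ω, w.card = y.card ∧ w ∉ A := by
        by_cases hxA : x ∈ A
        · refine ⟨z, by rw [← hxz, hm], ?_⟩
          intro hzA
          obtain ⟨a, haG, hax⟩ := Finset.mem_image.1 hxA
          obtain ⟨b, hbG, hbz⟩ := Finset.mem_image.1 hzA
          refine hz (b * a⁻¹)
            (G.mul_mem ((hmemGF b).1 hbG) (G.inv_mem ((hmemGF a).1 haG))) ?_
          rw [mul_smul, ← hax, inv_smul_smul, hbz]
        · exact ⟨x, hm, hxA⟩
      set P : Finset (Finset Ω) :=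
        Finset.powersetCard y.card (Finset.univ : Finset Ω) with hP
      have hwP : w ∈ P := by
        rw [hP, Finset.mem_powersetCard]
        exact ⟨Finset.subset_univ _, hwcard⟩
      have hAP : A ⊆ P.erase w := by
        rw [Finset.subset_erase]
        refine ⟨fun s hs => ?_, hwA⟩
        obtain ⟨a, haG, rfl⟩ := Finset.mem_image.1 hs
        rw [hP, Finset.mem_powersetCard]
        exact ⟨Finset.subset_univ _, Finset.card_smul_finset a y⟩
      have hL1 : GF.card + 1 ≤ (Fintype.card Ω).choose y.card := by
        have h1 := Finset.card_le_card hAP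
        rw [Finset.card_erase_of_mem hwP, hAcard] at h1
        have h2 : P.card = (Fintype.card Ω).choose y.card := by
          rw [hP, Finset.card_powersetCard, Finset.card_univ]
        have h3 : 1 ≤ P.card := Finset.card_pos.2 ⟨w, hwP⟩
        omega
      -- L2 : 2 * choose n (m-1) ≤ GF.card
      set Q : Finset (Finset Ω) :=
        Finset.powersetCard (y.card - 1) (Finset.univ : Finset Ω) with hQ
      have hQcard : Q.card = (Fintype.card Ω).choose (y.card - 1) := by
        rw [hQ, Finset.card_powersetCard, Finset.card_univ]
      have hch : ∀ v ∈ Q, ∃ a, a ∈ G ∧ a • u₀ = v := by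
        intro v hv
        have hvcard : v.card = y.card - 1 :=
          (Finset.mem_powersetCard.1 (hQ ▸ hv)).2
        obtain ⟨g, hg, hgv⟩ := hcase u₀ v (by rw [hu₀card, hvcard])
          (by rw [hu₀card]; omega)
        exact ⟨g, hg, hgv⟩
      set f : Finset Ω → Equiv.Perm Ω := fun v =>
        if h : ∃ a, a ∈ G ∧ a • u₀ = v then h.choose else 1 with hf
      have hfspec : ∀ v ∈ Q, f v ∈ G ∧ (f v) • u₀ = v := by
        intro v hv
        have hex := hch v hv
        rw [hf]
        simp only [dif_pos hex]
        exact hex.choose_spec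
      set D : Finset (Finset Ω × Equiv.Perm Ω) :=
        Q ×ˢ ({1, g₀} : Finset (Equiv.Perm Ω)) with hD
      have hg₀ne' : (1 : Equiv.Perm Ω) ≠ g₀ := fun h => hg₀ne h.symm
      have hDcard : D.card = Q.card * 2 := by
        rw [hD, Finset.card_product]
        congr 1
        rw [Finset.card_insert_of_notMem (by simpa using hg₀ne'),
          Finset.card_singleton]
      have hfix : ∀ t ∈ ({1, g₀} : Finset (Equiv.Perm Ω)), t • u₀ = u₀ := by
        intro t ht
        rcases Finset.mem_insert.1 ht with rfl | ht
        · exact one_smul _ _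
        · rw [Finset.mem_singleton.1 ht]; exact hg₀fix
      have hmaps : ∀ p ∈ D, (fun p : Finset Ω × Equiv.Perm Ω => f p.1 * p.2) p ∈ GF := by
        intro p hp
        obtain ⟨hp1, hp2⟩ := Finset.mem_product.1 (hD ▸ hp)
        have ht : p.2 ∈ G := by
          rcases Finset.mem_insert.1 hp2 with h | h
          · rw [h]; exact G.one_mem
          · rw [Finset.mem_singleton.1 h]; exact hg₀G
        exact (hmemGF _).2 (G.mul_mem (hfspec p.1 hp1).1 ht)
      have hval : ∀ p ∈ D, (f p.1 * p.2) • u₀ = p.1 := by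
        intro p hp
        obtain ⟨hp1, hp2⟩ := Finset.mem_product.1 (hD ▸ hp)
        rw [mul_smul, hfix p.2 hp2, (hfspec p.1 hp1).2]
      have hinj : Set.InjOn (fun p : Finset Ω × Equiv.Perm Ω => f p.1 * p.2) D := by
        intro p hp q hq hpq
        simp only at hpq
        have hp' : p ∈ D := hp
        have hq' : q ∈ D := hq
        have h1 : p.1 = q.1 := by
          rw [← hval p hp', ← hval q hq', hpq]
        have h2 : p.2 = q.2 := by
          rw [h1] at hpq
          exact mul_left_cancel hpq
        exact Prod.ext h1 h2
      have hL2 : Q.card * 2 ≤ GF.card := by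
        rw [← hDcard]
        exact Finset.card_le_card_of_injOn _ hmaps hinj
      -- numerics
      have hkey : (Fintype.card Ω).choose y.card * y.card
          = (Fintype.card Ω).choose (y.card - 1) * (y.card + 1) := by
        have h0 := Nat.choose_succ_right_eq (Fintype.card Ω) (y.card - 1)
        have e1 : y.card - 1 + 1 = y.card := by omega
        have e2 : Fintype.card Ω - (y.card - 1) = y.card + 1 := by omega
        rw [e1, e2] at h0
        exact h0
      have hpos : 0 < (Fintype.card Ω).choose (y.card - 1) :=
        Nat.choose_pos (by omega)
      rw [hQcard] at hL2
      set C1 := (Fintype.card Ω).choose y.card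
      set C0 := (Fintype.card Ω).choose (y.card - 1)
      have h5 : (2 * C0 + 1) * y.card ≤ C1 * y.card :=
        Nat.mul_le_mul_right _ (by omega)
      rw [hkey] at h5
      have h6 : C0 * 1 ≤ C0 * y.card := Nat.mul_le_mul_left _ (by omega)
      nlinarith [h5, h6, hpos, hm1]
    have hcu : u₀.card ≠ x.card := by rw [hu₀card, hm]; omega
    exact core G K hKG hmax x z u₀ hxz hz hreg' hcu
end
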